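/- Operator-norm perturbation of the n-qubit μ-biased QFT: for c ∈ (0,1] and μ, μ̃ ∈ [-1+c,1-c]ⁿ with ‖μ − μ̃‖_∞ ≤ ε, we have ‖H_μ^{⊗n} − H_{μ̃}^{⊗n}‖ ≤ 2ntε in operator norm, with t = ((2−c)(1/√(8c) + 1/(2c)) + 1)/c². -/

import Mathlib

open Finset

/-- Embed a Boolean bit as an element of `{-1, 1} ⊆ ℝ` (`true ↦ 1`, `false ↦ -1`). -/
def bval (b : Bool) : ℝ := if b then 1 else -1

/-- The product distribution `D_μ` on `{-1,1}ⁿ`: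
`D_μ(x) = ∏_{i : x_i = 1} (1+μ_i)/2 · ∏_{i : x_i = -1} (1-μ_i)/2`. -/
noncomputable def Dmu {n : ℕ} (μ : Fin n → ℝ) (x : Fin n → Bool) : ℝ :=
  ∏ i, (1 + μ i * bval (x i)) / 2

/-- The μ-biased basis function `φ_{μ,a}(x) = ∏_{i : a_i = 1} (x_i - μ_i)/√(1-μ_i²)`. -/
noncomputable def phimu {n : ℕ} (μ : Fin n → ℝ) (a : Fin n → Bool) (x : Fin n → Bool) : ℝ :=
  ∏ i, if a i then (bval (x i) - μ i) / Real.sqrt (1 - μ i ^ 2) else 1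

/-- The μ-biased Fourier coefficient `f̂_μ(a) = E_{x∼D_μ}[f(x) φ_{μ,a}(x)]`. -/
noncomputable def fhat {n : ℕ} (μ : Fin n → ℝ) (f : (Fin n → Bool) → ℝ)
    (a : Fin n → Bool) : ℝ :=
  ∑ x : Fin n → Bool, Dmu μ x * f x * phimu μ a x

/-- Single-bit distribution: `D_μ(1) = (1+μ)/2`, `D_μ(-1) = (1-μ)/2`. -/
noncomputable def D1 (μ : ℝ) (b : Bool) : ℝ := (1 + μ * bval b) / 2

/-- Single-bit μ-biased basis: `φ_{μ,0}(b) = 1`, `φ_{μ,1}(b) = (b-μ)/√(1-μ²)`. -/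
noncomputable def phi1 (μ : ℝ) (v : Bool) (b : Bool) : ℝ :=
  if v then (bval b - μ) / Real.sqrt (1 - μ ^ 2) else 1

/-- The single-qubit μ-biased QFT, as a matrix: entry at `(v,b)` is `√(D_μ(b)) φ_{μ,v}(b)`. -/
noncomputable def H1 (μ : ℝ) : Matrix Bool Bool ℝ :=
  fun v b => Real.sqrt (D1 μ b) * phi1 μ v b

/-- The n-qubit μ-biased QFT, the tensor product `⊗ᵢ H_{μᵢ}` of single-qubit transforms,
as a matrix indexed by `{0,1}ⁿ × {-1,1}ⁿ`. -/
noncomputable def Hn {n : ℕ} (μ : Fin n → ℝ) :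
    Matrix (Fin n → Bool) (Fin n → Bool) ℝ :=
  fun a x => ∏ i, H1 (μ i) (a i) (x i)

section AuxQFT

open Matrix

/-! ### Entrywise form of `H1` -/

lemma H1_ff (μ : ℝ) : H1 μ false false = Real.sqrt ((1 - μ)/2) := by
  simp only [H1, phi1, D1, bval]; norm_num
  congr 1

lemma H1_ft (μ : ℝ) : H1 μ false true = Real.sqrt ((1 + μ)/2) := by
  simp only [H1, phi1, D1, bval]; norm_num

lemma H1_tt {μ : ℝ} (h1 : -1 < μ) (h2 : μ < 1) : H1 μ true true = Real.sqrt ((1 - μ)/2) := by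
  have h1p : (0:ℝ) < 1 + μ := by linarith
  have h1m : (0:ℝ) < 1 - μ := by linarith
  have hs : Real.sqrt (1 - μ^2) = Real.sqrt (1+μ) * Real.sqrt (1-μ) := by
    rw [← Real.sqrt_mul h1p.le]; congr 1; ring
  have ha2 : Real.sqrt (1+μ) ^ 2 = 1 + μ := Real.sq_sqrt h1p.le
  have hb2 : Real.sqrt (1-μ) ^ 2 = 1 - μ := Real.sq_sqrt h1m.le
  have ha : 0 < Real.sqrt (1+μ) := Real.sqrt_pos.2 h1p
  have hb : 0 < Real.sqrt (1-μ) := Real.sqrt_pos.2 h1m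
  have hr2 : 0 < Real.sqrt 2 := by positivity
  simp only [H1, phi1, D1, bval]
  norm_num
  rw [hs]
  field_simp
  linear_combination (-1) * hb2

lemma H1_tf {μ : ℝ} (h1 : -1 < μ) (h2 : μ < 1) : H1 μ true false = -Real.sqrt ((1 + μ)/2) := by
  have h1p : (0:ℝ) < 1 + μ := by linarith
  have h1m : (0:ℝ) < 1 - μ := by linarith
  have hs : Real.sqrt (1 - μ^2) = Real.sqrt (1+μ) * Real.sqrt (1-μ) := by
    rw [← Real.sqrt_mul h1p.le]; congr 1; ring
  have ha2 : Real.sqrt (1+μ) ^ 2 = 1 + μ := Real.sq_sqrt h1p.le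
  have hb2 : Real.sqrt (1-μ) ^ 2 = 1 - μ := Real.sq_sqrt h1m.le
  have ha : 0 < Real.sqrt (1+μ) := Real.sqrt_pos.2 h1p
  have hb : 0 < Real.sqrt (1-μ) := Real.sqrt_pos.2 h1m
  have hr2 : 0 < Real.sqrt 2 := by positivity
  simp only [H1, phi1, D1, bval]
  norm_num
  have hE : Real.sqrt (1 + -μ) = Real.sqrt (1 - μ) := by rw [show (1:ℝ) + -μ = 1 - μ by ring]
  rw [hs]
  field_simp
  rw [hE]
  linear_combination (Real.sqrt (1-μ)) * ha2

lemma H1_orth {μ : ℝ} (h1 : -1 < μ) (h2 : μ < 1) : H1 μ * (H1 μ)ᵀ = 1 := by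
  have h1p : (0:ℝ) < 1 + μ := by linarith
  have h1m : (0:ℝ) < 1 - μ := by linarith
  ext v w
  rw [Matrix.mul_apply, Fintype.sum_bool]
  cases v <;> cases w <;>
    simp only [Matrix.transpose_apply, H1_ff, H1_ft, H1_tt h1 h2, H1_tf h1 h2,
      Matrix.one_apply] <;> norm_num <;>
    field_simp <;>
    nlinarith [Real.sq_sqrt (show (0:ℝ) ≤ 1+μ by linarith),
      Real.sq_sqrt (show (0:ℝ) ≤ 1-μ by linarith),
      Real.sq_sqrt (show (0:ℝ) ≤ 2 by norm_num)]

/-! ### Lipschitz estimates for entries -/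

lemma sqrt_diff_le {d x y : ℝ} (hd : 0 < d) (hx : d ≤ x) (hy : d ≤ y) :
    |Real.sqrt x - Real.sqrt y| ≤ |x - y| / (2 * Real.sqrt d) := by
  have hsd : 0 < Real.sqrt d := Real.sqrt_pos.2 hd
  have hdx : Real.sqrt d ≤ Real.sqrt x := Real.sqrt_le_sqrt hx
  have hdy : Real.sqrt d ≤ Real.sqrt y := Real.sqrt_le_sqrt hy
  have hx2 : Real.sqrt x ^ 2 = x := Real.sq_sqrt (hd.le.trans hx)
  have hy2 : Real.sqrt y ^ 2 = y := Real.sq_sqrt (hd.le.trans hy)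
  rw [le_div_iff₀ (by positivity)]
  rcases le_total x y with h | h
  · have hxy : Real.sqrt x ≤ Real.sqrt y := Real.sqrt_le_sqrt h
    rw [abs_of_nonpos (by linarith), abs_of_nonpos (by linarith)]
    nlinarith
  · have hxy : Real.sqrt y ≤ Real.sqrt x := Real.sqrt_le_sqrt h
    rw [abs_of_nonneg (by linarith), abs_of_nonneg (by linarith)]
    nlinarith

lemma sqrt8 {c : ℝ} (hc : 0 < c) : Real.sqrt (8 * c) = 4 * Real.sqrt (c / 2) := by
  rw [show (8:ℝ) * c = 16 * (c/2) by ring, show (16:ℝ) * (c/2) = 4^2 * (c/2) by norm_num,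
    Real.sqrt_mul (by positivity), Real.sqrt_sq (by norm_num)]

lemma half_lip {c x y : ℝ} (hc : 0 < c) (hx : -1 + c ≤ x) (hy : -1 + c ≤ y) :
    |Real.sqrt ((1 + x)/2) - Real.sqrt ((1 + y)/2)| ≤ |x - y| / Real.sqrt (8 * c) := by
  have h := sqrt_diff_le (d := c/2) (x := (1+x)/2) (y := (1+y)/2)
    (by linarith) (by linarith) (by linarith)
  rw [sqrt8 hc]
  have e : |(1 + x)/2 - (1 + y)/2| = |x - y| / 2 := by
    rw [show (1 + x)/2 - (1 + y)/2 = (x - y)/2 by ring, abs_div]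
    norm_num
  rw [e] at h
  calc |Real.sqrt ((1 + x)/2) - Real.sqrt ((1 + y)/2)| ≤ |x - y| / 2 / (2 * Real.sqrt (c/2)) := h
    _ = |x - y| / (4 * Real.sqrt (c/2)) := by
        rw [div_div]; ring_nf

lemma H1_entry_diff {c x y : ℝ} (hc : 0 < c) (hx : |x| ≤ 1 - c) (hy : |y| ≤ 1 - c) (v b : Bool) :
    |H1 x v b - H1 y v b| ≤ |x - y| / Real.sqrt (8 * c) := by
  have hx' := abs_le.1 hx
  have hy' := abs_le.1 hy
  have hx1 : -1 < x := by linarith [hx'.1]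
  have hx2 : x < 1 := by linarith [hx'.2]
  have hy1 : -1 < y := by linarith [hy'.1]
  have hy2 : y < 1 := by linarith [hy'.2]
  have key : ∀ u v : ℝ, -1 + c ≤ u → -1 + c ≤ v →
      |Real.sqrt ((1 + u)/2) - Real.sqrt ((1 + v)/2)| ≤ |u - v| / Real.sqrt (8*c) :=
    fun u v hu hv => half_lip hc hu hv
  cases v <;> cases b
  · rw [H1_ff, H1_ff, show (1 - x)/2 = (1 + (-x))/2 by ring, show (1 - y)/2 = (1 + (-y))/2 by ring]
    have := key (-x) (-y) (by linarith [hx'.2]) (by linarith [hy'.2])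
    calc _ ≤ |(-x) - (-y)| / Real.sqrt (8*c) := this
      _ = |x - y| / Real.sqrt (8*c) := by rw [show (-x) - (-y) = -(x - y) by ring, abs_neg]
  · rw [H1_ft, H1_ft]
    exact key x y (by linarith [hx'.1]) (by linarith [hy'.1])
  · rw [H1_tf hx1 hx2, H1_tf hy1 hy2,
      show -Real.sqrt ((1+x)/2) - -Real.sqrt ((1+y)/2)
        = -(Real.sqrt ((1+x)/2) - Real.sqrt ((1+y)/2)) by ring, abs_neg]
    exact key x y (by linarith [hx'.1]) (by linarith [hy'.1])
  · rw [H1_tt hx1 hx2, H1_tt hy1 hy2, show (1 - x)/2 = (1 + (-x))/2 by ring,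
      show (1 - y)/2 = (1 + (-y))/2 by ring]
    have := key (-x) (-y) (by linarith [hx'.2]) (by linarith [hy'.2])
    calc _ ≤ |(-x) - (-y)| / Real.sqrt (8*c) := this
      _ = |x - y| / Real.sqrt (8*c) := by rw [show (-x) - (-y) = -(x - y) by ring, abs_neg]

/-! ### Tensor products of 2×2 matrices -/

noncomputable def tens {n : ℕ} (A : Fin n → Matrix Bool Bool ℝ) :
    Matrix (Fin n → Bool) (Fin n → Bool) ℝ :=
  Matrix.of fun a x => ∏ i, A i (a i) (x i)

lemma tens_apply {n : ℕ} (A : Fin n → Matrix Bool Bool ℝ) (a x : Fin n → Bool) :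
    tens A a x = ∏ i, A i (a i) (x i) := rfl

lemma tens_mul {n : ℕ} (A B : Fin n → Matrix Bool Bool ℝ) :
    tens A * tens B = tens (fun i => A i * B i) := by
  ext a x
  simp only [Matrix.mul_apply, tens_apply]
  rw [Finset.prod_univ_sum, Fintype.piFinset_univ]
  exact Finset.sum_congr rfl fun y _ => Finset.prod_mul_distrib.symm

lemma tens_transpose {n : ℕ} (A : Fin n → Matrix Bool Bool ℝ) :
    (tens A)ᵀ = tens (fun i => (A i)ᵀ) := rfl

lemma tens_one {n : ℕ} : tens (fun _ : Fin n => (1 : Matrix Bool Bool ℝ)) = 1 := by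
  ext a x
  simp only [tens_apply, Matrix.one_apply, Finset.prod_boole]
  simp [funext_iff, eq_comm]

lemma tens_orth {n : ℕ} (P : Fin n → Matrix Bool Bool ℝ) (h : ∀ i, P i * (P i)ᵀ = 1) :
    tens P * (tens P)ᵀ = 1 := by
  rw [tens_transpose, tens_mul,
    show (fun i => P i * (P i)ᵀ) = fun _ : Fin n => (1 : Matrix Bool Bool ℝ) from funext h]
  exact tens_one

lemma tens_sub {n : ℕ} (A A' : Fin n → Matrix Bool Bool ℝ) (j : Fin n)
    (h : ∀ i, i ≠ j → A i = A' i) :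
    tens A - tens A' = tens (fun i => if i = j then A j - A' j else A i) := by
  ext a x
  simp only [Matrix.sub_apply, tens_apply]
  rw [← Finset.mul_prod_erase univ (fun i => A i (a i) (x i)) (mem_univ j),
      ← Finset.mul_prod_erase univ (fun i => A' i (a i) (x i)) (mem_univ j),
      ← Finset.mul_prod_erase univ _ (mem_univ j)]
  have e1 : ∏ i ∈ univ.erase j, A' i (a i) (x i) = ∏ i ∈ univ.erase j, A i (a i) (x i) :=
    Finset.prod_congr rfl fun i hi => by rw [h i (Finset.ne_of_mem_erase hi)]
  have e2 : ∏ i ∈ univ.erase j, (if i = j then A j - A' j else A i) (a i) (x i)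
      = ∏ i ∈ univ.erase j, A i (a i) (x i) :=
    Finset.prod_congr rfl fun i hi => by rw [if_neg (Finset.ne_of_mem_erase hi)]
  rw [e1, e2, if_pos rfl, Matrix.sub_apply]
  ring

lemma slot_apply {n : ℕ} (j : Fin n) (D : Matrix Bool Bool ℝ) (a b : Fin n → Bool) :
    tens (fun i => if i = j then D else 1) a b
      = D (a j) (b j) * ∏ i ∈ univ.erase j, (1 : Matrix Bool Bool ℝ) (a i) (b i) := by
  rw [tens_apply, ← Finset.mul_prod_erase univ _ (mem_univ j), if_pos rfl]
  congr 1
  exact Finset.prod_congr rfl fun i hi => by rw [if_neg (Finset.ne_of_mem_erase hi)]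

lemma mulVec_slot {n : ℕ} (j : Fin n) (D : Matrix Bool Bool ℝ) (y : (Fin n → Bool) → ℝ)
    (a : Fin n → Bool) :
    (tens (fun i => if i = j then D else 1)).mulVec y a
      = D (a j) false * y (Function.update a j false)
        + D (a j) true * y (Function.update a j true) := by
  classical
  have hne : Function.update a j false ≠ Function.update a j true := by
    intro h
    have := congrFun h j
    simp at this
  have hval : ∀ b : Bool, tens (fun i => if i = j then D else 1) a (Function.update a j b)
      = D (a j) b := by
    intro b
    rw [slot_apply]
    have : ∀ i ∈ univ.erase j, (1 : Matrix Bool Bool ℝ) (a i) (Function.update a j b i) = 1 := by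
      intro i hi
      rw [Function.update_of_ne (Finset.ne_of_mem_erase hi), Matrix.one_apply_eq]
    rw [Finset.prod_congr rfl this, Finset.prod_const_one, Function.update_self, mul_one]
  rw [Matrix.mulVec, dotProduct]
  rw [← Finset.sum_subset (Finset.subset_univ
        ({Function.update a j false, Function.update a j true} : Finset (Fin n → Bool)))]
  · rw [Finset.sum_pair hne, hval, hval]
  · intro x _ hx
    simp only [Finset.mem_insert, Finset.mem_singleton] at hx
    push_neg at hx
    have hxu : x ≠ Function.update a j (x j) := by
      cases hb : x j
      · exact hx.1
      · exact hx.2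
    obtain ⟨i, hi⟩ := Function.ne_iff.1 hxu
    have hij : i ≠ j := by
      intro h; subst h; simp at hi
    have hxi : x i ≠ a i := by
      rwa [Function.update_of_ne hij] at hi
    rw [slot_apply]
    have : (1 : Matrix Bool Bool ℝ) (a i) (x i) = 0 :=
      Matrix.one_apply_ne fun h => hxi h.symm
    rw [Finset.prod_eq_zero (Finset.mem_erase.2 ⟨hij, mem_univ i⟩) this, mul_zero, zero_mul]

lemma sum_update_le {n : ℕ} (j : Fin n) (b : Bool) (g : (Fin n → Bool) → ℝ)
    (hg : ∀ a, 0 ≤ g a) :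
    ∑ a : Fin n → Bool, g (Function.update a j b) ≤ 2 * ∑ a : Fin n → Bool, g a := by
  classical
  rw [← Finset.sum_filter_add_sum_filter_not univ (fun a => a j = b)
    (fun a => g (Function.update a j b))]
  have h1 : ∑ a ∈ univ.filter (fun a => a j = b), g (Function.update a j b)
      = ∑ a ∈ univ.filter (fun a => a j = b), g a := by
    refine Finset.sum_congr rfl fun a ha => ?_
    have : a j = b := (Finset.mem_filter.1 ha).2
    rw [← this, Function.update_eq_self]
  have h2 : ∑ a ∈ univ.filter (fun a => ¬ a j = b), g (Function.update a j b)
      = ∑ a ∈ univ.filter (fun a => a j = b), g a := by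
    refine Finset.sum_nbij' (fun a => Function.update a j b) (fun a => Function.update a j (!b))
      ?_ ?_ ?_ ?_ ?_
    · intro a ha
      simp only [Finset.mem_filter, Function.update_self, mem_univ, true_and]
    · intro a ha
      simp only [Finset.mem_filter, Function.update_self, mem_univ, true_and]
      simp
    · intro a ha
      have haj : a j = !b := by
        have := (Finset.mem_filter.1 ha).2
        cases b <;> cases hab : a j <;> simp_all
      funext i
      rcases eq_or_ne i j with rfl | hij
      · simp [haj]
      · simp [Function.update_of_ne hij]
    · intro a ha
      have haj : a j = b := (Finset.mem_filter.1 ha).2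
      funext i
      rcases eq_or_ne i j with rfl | hij
      · simp [haj]
      · simp [Function.update_of_ne hij]
    · intro a ha
      rfl
  rw [h1, h2]
  have h3 : ∑ a ∈ univ.filter (fun a => a j = b), g a ≤ ∑ a : Fin n → Bool, g a :=
    Finset.sum_le_sum_of_subset_of_nonneg (Finset.filter_subset _ _) fun a _ _ => hg a
  linarith

/-! ### Operator norm bounds -/

lemma euclid_norm {n : ℕ} (v : EuclideanSpace ℝ (Fin n → Bool)) :
    ‖v‖ = Real.sqrt (∑ a, (v a)^2) := by
  rw [EuclideanSpace.norm_eq]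
  congr 1
  exact Finset.sum_congr rfl fun a _ => by rw [Real.norm_eq_abs, sq_abs]

lemma norm_slot {n : ℕ} (j : Fin n) (D : Matrix Bool Bool ℝ) (κ : ℝ)
    (hκ : ∀ v b, |D v b| ≤ κ) :
    ‖Matrix.toEuclideanCLM (𝕜 := ℝ) (tens (fun i => if i = j then D else 1))‖
      ≤ 2 * Real.sqrt 2 * κ := by
  have hκ0 : 0 ≤ κ := le_trans (abs_nonneg _) (hκ false false)
  set Q := tens (fun i : Fin n => if i = j then D else 1) with hQ
  refine ContinuousLinearMap.opNorm_le_bound _ (by positivity) fun x => ?_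
  set y : (Fin n → Bool) → ℝ := (WithLp.equiv 2 _) x with hy
  have happ : Matrix.toEuclideanCLM (𝕜 := ℝ) Q x = (WithLp.equiv 2 _).symm (Q.mulVec y) := by
    rfl
  have hsq : ∀ a b : ℝ, |a| ≤ b → a^2 ≤ b^2 := fun a b h => by nlinarith [abs_nonneg a, sq_abs a]
  have key : ∑ a, (Q.mulVec y a)^2 ≤ (2 * Real.sqrt 2 * κ)^2 * ∑ a, (y a)^2 := by
    have hptwise : ∀ a, (Q.mulVec y a)^2
        ≤ 2*κ^2 * ((y (Function.update a j false))^2 + (y (Function.update a j true))^2) := by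
      intro a
      rw [hQ, mulVec_slot]
      have h1 : D (a j) false ^2 ≤ κ^2 := hsq _ _ (hκ _ _)
      have h2 : D (a j) true ^2 ≤ κ^2 := hsq _ _ (hκ _ _)
      nlinarith [sq_nonneg (D (a j) false * y (Function.update a j false)
          - D (a j) true * y (Function.update a j true)),
        sq_nonneg (y (Function.update a j false)), sq_nonneg (y (Function.update a j true)),
        mul_le_mul_of_nonneg_right h1 (sq_nonneg (y (Function.update a j false))),
        mul_le_mul_of_nonneg_right h2 (sq_nonneg (y (Function.update a j true)))]
    calc ∑ a, (Q.mulVec y a)^2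
        ≤ ∑ a, (2*κ^2 * ((y (Function.update a j false))^2 + (y (Function.update a j true))^2)) :=
          Finset.sum_le_sum fun a _ => hptwise a
      _ = 2*κ^2 * (∑ a, (y (Function.update a j false))^2
            + ∑ a, (y (Function.update a j true))^2) := by
          rw [← Finset.mul_sum, Finset.sum_add_distrib]
      _ ≤ 2*κ^2 * ((2 * ∑ a, (y a)^2) + (2 * ∑ a, (y a)^2)) := by
          have hf := sum_update_le j false (fun a => (y a)^2) (fun a => sq_nonneg _)
          have ht := sum_update_le j true (fun a => (y a)^2) (fun a => sq_nonneg _)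
          have : (0:ℝ) ≤ 2*κ^2 := by positivity
          nlinarith
      _ = (2 * Real.sqrt 2 * κ)^2 * ∑ a, (y a)^2 := by
          have h2 : Real.sqrt 2 ^ 2 = 2 := Real.sq_sqrt (by norm_num)
          have e : (2 * Real.sqrt 2 * κ)^2 = 8 * κ^2 := by
            rw [mul_pow, mul_pow, h2]; ring
          rw [e]; ring
  rw [happ, euclid_norm, euclid_norm]
  have hyx : ∀ a, ((WithLp.equiv 2 _).symm (Q.mulVec y) : EuclideanSpace ℝ (Fin n → Bool)) a
      = Q.mulVec y a := fun a => rfl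
  have hxy : ∀ a, x a = y a := fun a => rfl
  simp only [hyx, hxy]
  calc Real.sqrt (∑ a, (Q.mulVec y a)^2)
      ≤ Real.sqrt ((2 * Real.sqrt 2 * κ)^2 * ∑ a, (y a)^2) := Real.sqrt_le_sqrt key
    _ = (2 * Real.sqrt 2 * κ) * Real.sqrt (∑ a, (y a)^2) := by
        rw [Real.sqrt_mul (sq_nonneg _), Real.sqrt_sq (by positivity)]

set_option maxHeartbeats 1000000 in
lemma norm_orth {n : ℕ} (M : Matrix (Fin n → Bool) (Fin n → Bool) ℝ) (h : M * Mᵀ = 1) :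
    ‖Matrix.toEuclideanCLM (𝕜 := ℝ) M‖ ≤ 1 := by
  have h2 : Mᵀ * M = 1 := mul_eq_one_comm.1 h
  set u := Matrix.toEuclideanCLM (𝕜 := ℝ) M with hu
  have hstar : star u = Matrix.toEuclideanCLM (𝕜 := ℝ) Mᵀ := by
    rw [hu, ← map_star]
    congr 1
  have huu : star u * u = 1 := by
    rw [hstar, hu,
      show Matrix.toEuclideanCLM (𝕜 := ℝ) Mᵀ * Matrix.toEuclideanCLM (𝕜 := ℝ) M
          = Matrix.toEuclideanCLM (𝕜 := ℝ) (Mᵀ * M) from (_root_.map_mul _ _ _).symm,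
      h2, _root_.map_one]
  have hcs : ‖star u * u‖ = ‖u‖ * ‖u‖ := CStarRing.norm_star_mul_self (x := u)
  rw [huu] at hcs
  haveI : Nontrivial (EuclideanSpace ℝ (Fin n → Bool)) := inferInstance
  rw [norm_one] at hcs
  nlinarith [norm_nonneg u]

end AuxQFT

/-- Operator-norm perturbation of the n-qubit μ-biased QFT: for `c ∈ (0,1]` and
`μ, μ̃ ∈ [-1+c, 1-c]ⁿ` with `‖μ − μ̃‖_∞ ≤ ε`, we have `‖H_μ^{⊗n} − H_μ̃^{⊗n}‖ ≤ 2ntε`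
in operator norm, where `t = ((2−c)(1/√(8c) + 1/(2c)) + 1)/c²`. -/


theorem n_qubit_QFT_perturbation {n : ℕ} (c ε : ℝ) (hc : 0 < c) (hc1 : c ≤ 1)
    (μ μt : Fin n → ℝ) (hμ : ∀ i, |μ i| ≤ 1 - c) (hμt : ∀ i, |μt i| ≤ 1 - c)
    (hε₀ : 0 ≤ ε) (hε : ∀ i, |μ i - μt i| ≤ ε) :
    ‖Matrix.toEuclideanCLM (𝕜 := ℝ) (Hn μ) - Matrix.toEuclideanCLM (𝕜 := ℝ) (Hn μt)‖ ≤
      2 * n * (((2 - c) * (1 / Real.sqrt (8 * c) + 1 / (2 * c)) + 1) / c ^ 2) * ε := by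
  classical
  set t := ((2 - c) * (1 / Real.sqrt (8 * c) + 1 / (2 * c)) + 1) / c ^ 2 with ht
  have hHn : ∀ ν : Fin n → ℝ, Hn ν = tens (fun i => H1 (ν i)) := fun ν => rfl
  set ν : ℕ → Fin n → ℝ := fun k i => if (i : ℕ) < k then μt i else μ i with hν
  have hbound : ∀ k i, |ν k i| ≤ 1 - c := fun k i => by
    by_cases h : (i:ℕ) < k <;> simp only [hν, h, if_true, if_false] <;>
      [exact hμt i; exact hμ i]
  have hg0 : ν 0 = μ := funext fun i => by simp [hν]
  have hgn : ν n = μt := funext fun i => by simp [hν, i.isLt]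
  have main : Matrix.toEuclideanCLM (𝕜 := ℝ) (Hn μ) - Matrix.toEuclideanCLM (𝕜 := ℝ) (Hn μt)
      = ∑ k ∈ Finset.range n, (Matrix.toEuclideanCLM (𝕜 := ℝ) (Hn (ν k))
          - Matrix.toEuclideanCLM (𝕜 := ℝ) (Hn (ν (k+1)))) := by
    rw [Finset.sum_range_sub' (f := fun k => Matrix.toEuclideanCLM (𝕜 := ℝ) (Hn (ν k))) n,
      hg0, hgn]
  have hterm : ∀ k ∈ Finset.range n,
      ‖Matrix.toEuclideanCLM (𝕜 := ℝ) (Hn (ν k))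
        - Matrix.toEuclideanCLM (𝕜 := ℝ) (Hn (ν (k+1)))‖ ≤ 2 * t * ε := by
    intro k hk
    set j : Fin n := ⟨k, Finset.mem_range.1 hk⟩ with hj
    have hνk : ν k j = μ j := by simp [hν, hj]
    have hνk1 : ν (k+1) j = μt j := by simp [hν, hj]
    have hagree : ∀ i : Fin n, i ≠ j → H1 (ν k i) = H1 (ν (k+1) i) := by
      intro i hij
      have hik : (i:ℕ) ≠ k := fun h => hij (Fin.ext h)
      by_cases h : (i:ℕ) < k
      · simp [hν, h, Nat.lt_succ_of_lt h]
      · have h2 : ¬ ((i:ℕ) < k+1) := by omega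
        simp [hν, h, h2]
    set D := H1 (μ j) - H1 (μt j) with hD
    have hsub : Hn (ν k) - Hn (ν (k+1)) = tens (fun i => if i = j then D else H1 (ν k i)) := by
      rw [hHn, hHn, tens_sub _ _ j hagree, hνk, hνk1, ← hD]
    have hfact : tens (fun i => if i = j then D else H1 (ν k i))
        = tens (fun i => if i = j then 1 else H1 (ν k i)) * tens (fun i => if i = j then D else 1) := by
      rw [tens_mul]
      refine congrArg tens (funext fun i => ?_)
      by_cases h : i = j <;> simp [h]
    have hP : ‖Matrix.toEuclideanCLM (𝕜 := ℝ) (tens (fun i => if i = j then 1 else H1 (ν k i)))‖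
        ≤ 1 := by
      refine norm_orth _ (tens_orth _ fun i => ?_)
      by_cases h : i = j
      · simp [h]
      · have hb := abs_le.1 (hbound k i)
        rw [if_neg h]
        exact H1_orth (by linarith [hb.1]) (by linarith [hb.2])
    have hE : ‖Matrix.toEuclideanCLM (𝕜 := ℝ) (tens (fun i => if i = j then D else 1))‖
        ≤ 2 * Real.sqrt 2 * (ε / Real.sqrt (8*c)) := by
      refine norm_slot j D _ fun v b => ?_
      have h1 := H1_entry_diff hc (hμ j) (hμt j) v b
      have h8 : 0 < Real.sqrt (8*c) := Real.sqrt_pos.2 (by linarith)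
      have h2 : |μ j - μt j| / Real.sqrt (8*c) ≤ ε / Real.sqrt (8*c) := by
        gcongr
        exact hε j
      calc |D v b| = |H1 (μ j) v b - H1 (μt j) v b| := by rw [hD, Matrix.sub_apply]
        _ ≤ |μ j - μt j| / Real.sqrt (8*c) := h1
        _ ≤ ε / Real.sqrt (8*c) := h2
    have hnum : 2 * Real.sqrt 2 * (ε / Real.sqrt (8*c)) ≤ 2 * t * ε := by
      have hsc : 0 < Real.sqrt c := Real.sqrt_pos.2 hc
      have h2p : 0 < Real.sqrt 2 := by positivity
      have hc8 : Real.sqrt (8*c) = 2 * Real.sqrt 2 * Real.sqrt c := by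
        rw [show (8:ℝ)*c = 4*(2*c) by ring, show (4:ℝ) = 2^2 by norm_num,
          Real.sqrt_mul (by positivity), Real.sqrt_sq (by norm_num),
          Real.sqrt_mul (by norm_num)]
        ring
      have heq : 2 * Real.sqrt 2 * (ε / Real.sqrt (8*c)) = ε / Real.sqrt c := by
        rw [hc8]
        field_simp
      rw [heq]
      have hsc1 : Real.sqrt c ≤ 1 := Real.sqrt_le_one.mpr hc1
      have hcsc : c ≤ Real.sqrt c := by
        nlinarith [Real.sq_sqrt hc.le, Real.sqrt_nonneg c]
      have hstep1 : ε / Real.sqrt c ≤ ε / c := by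
        gcongr
      have hnn : 0 ≤ (2-c) * (1 / Real.sqrt (8*c) + 1 / (2*c)) := by
        have : (0:ℝ) ≤ 1 / Real.sqrt (8*c) + 1 / (2*c) := by positivity
        nlinarith
      have ht1 : 1/c^2 ≤ t := by
        rw [ht]
        gcongr
        linarith
      have hkey : 1/c ≤ 2*t := by
        have h1c : 1/c ≤ 2/c^2 := by
          rw [div_le_div_iff₀ hc (by positivity)]
          nlinarith
        have : 2/c^2 ≤ 2*t := by
          have := mul_le_mul_of_nonneg_left ht1 (by norm_num : (0:ℝ) ≤ 2)
          calc 2/c^2 = 2 * (1/c^2) := by ring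
            _ ≤ 2 * t := this
        linarith
      calc ε / Real.sqrt c ≤ ε / c := hstep1
        _ = ε * (1/c) := by ring
        _ ≤ ε * (2*t) := mul_le_mul_of_nonneg_left hkey hε₀
        _ = 2 * t * ε := by ring
    calc ‖Matrix.toEuclideanCLM (𝕜 := ℝ) (Hn (ν k))
          - Matrix.toEuclideanCLM (𝕜 := ℝ) (Hn (ν (k+1)))‖
        = ‖Matrix.toEuclideanCLM (𝕜 := ℝ) (Hn (ν k) - Hn (ν (k+1)))‖ := by
          rw [_root_.map_sub]
      _ = ‖Matrix.toEuclideanCLM (𝕜 := ℝ) (tens (fun i => if i = j then 1 else H1 (ν k i)))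
            * Matrix.toEuclideanCLM (𝕜 := ℝ) (tens (fun i => if i = j then D else 1))‖ := by
          rw [hsub, hfact, _root_.map_mul]
      _ ≤ ‖Matrix.toEuclideanCLM (𝕜 := ℝ) (tens (fun i => if i = j then 1 else H1 (ν k i)))‖
            * ‖Matrix.toEuclideanCLM (𝕜 := ℝ) (tens (fun i => if i = j then D else 1))‖ :=
          norm_mul_le _ _
      _ ≤ 1 * (2 * Real.sqrt 2 * (ε / Real.sqrt (8*c))) :=
          mul_le_mul hP hE (norm_nonneg _) zero_le_one
      _ = 2 * Real.sqrt 2 * (ε / Real.sqrt (8*c)) := one_mul _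
      _ ≤ 2 * t * ε := hnum
  rw [main]
  calc ‖∑ k ∈ Finset.range n, (Matrix.toEuclideanCLM (𝕜 := ℝ) (Hn (ν k))
          - Matrix.toEuclideanCLM (𝕜 := ℝ) (Hn (ν (k+1))))‖
      ≤ ∑ k ∈ Finset.range n, ‖Matrix.toEuclideanCLM (𝕜 := ℝ) (Hn (ν k))
          - Matrix.toEuclideanCLM (𝕜 := ℝ) (Hn (ν (k+1)))‖ := norm_sum_le _ _
    _ ≤ ∑ _k ∈ Finset.range n, (2 * t * ε) := Finset.sum_le_sum hterm
    _ = n * (2 * t * ε) := by rw [Finset.sum_const, Finset.card_range, nsmul_eq_mul]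
    _ = 2 * n * t * ε := by ring
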